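/- arXiv:1610.04200 — 3 statements merged into one kernel-verified Lean document; each statement's English description precedes it below -/
import Mathlib

section
/- Let u: ℝⁿ → ℝ be continuous with u(0) = 0, ‖∇u‖_{L^∞(ℝⁿ)} = 1 (u is 1-Lipschitz with Lipschitz constant exactly 1 in every ball complement sense), and suppose that sup_{r ≥ ρ} r^{ε−2}·‖u‖_{L^∞(B_r)} → ∞ as ρ → 0⁺ for some ε ∈ (0,1). Then there exists a sequence r_k → 0⁺ such that ‖∇u‖_{L^∞(B_{r_k})} ≥ (1/2)·r_k^{1−ε}, and the rescaled functions u_k(x) = u(r_k x)/(r_k·‖∇u‖_{L^∞(B_{r_k})}) satisfy |∇u_k(x)| ≤ 2(1 + |x|^{1−ε}) for all x ∈ ℝⁿ. -/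
open Real Filter MeasureTheory

set_option maxHeartbeats 1000000 in
/-- Blow-up sequence construction at a regular point (Lemma 5.2): if `u` is a
`C¹` function with `u(0) = 0`, `‖∇u‖_{L^∞(ℝⁿ)} = 1`, and
`sup_{r ≥ ρ} r^{ε-2} ‖u‖_{L^∞(B_r)} → ∞` as `ρ → 0⁺` (i.e. the supremum is
unbounded along small radii), then there is a sequence `r_k → 0⁺` with
`‖∇u‖_{L^∞(B_{r_k})} ≥ (1/2) r_k^{1-ε}`, and the rescalings
`u_k(x) = u(r_k x)/(r_k ‖∇u‖_{L^∞(B_{r_k})})` satisfy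
`|∇u_k(x)| ≤ 2(1 + |x|^{1-ε})` for all `x`. -/
theorem blowup_sequence_at_regular_point (n : ℕ) (ε : ℝ) (hε : ε ∈ Set.Ioo (0 : ℝ) 1)
    (u : EuclideanSpace ℝ (Fin n) → ℝ)
    (hcont : Continuous u) (h0 : u 0 = 0)
    (hdiff : Differentiable ℝ u)
    (hgrad_le : ∀ x, ‖fderiv ℝ u x‖ ≤ 1)
    (hgrad_sup : (⨆ x : EuclideanSpace ℝ (Fin n), ‖fderiv ℝ u x‖) = 1)
    (hblow : ∀ M : ℝ, ∃ r ∈ Set.Ioc (0 : ℝ) 1,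
      M * r ^ ((2 : ℝ) - ε) <
        ⨆ x : Metric.closedBall (0 : EuclideanSpace ℝ (Fin n)) r, |u x.1|) :
    ∃ r : ℕ → ℝ, (∀ k, 0 < r k) ∧ Tendsto r atTop (nhds 0) ∧
      ∀ k,
        (1 / 2) * (r k) ^ ((1 : ℝ) - ε) ≤
          (⨆ x : Metric.closedBall (0 : EuclideanSpace ℝ (Fin n)) (r k),
            ‖fderiv ℝ u x.1‖) ∧
        ∀ x : EuclideanSpace ℝ (Fin n),
          ‖fderiv ℝ (fun y => u ((r k) • y) /
              ((r k) * ⨆ z : Metric.closedBall (0 : EuclideanSpace ℝ (Fin n)) (r k),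
                ‖fderiv ℝ u z.1‖)) x‖ ≤ 2 * (1 + ‖x‖ ^ ((1 : ℝ) - ε)) := by
  obtain ⟨hε0, hε1⟩ := hε
  have hε' : (0:ℝ) < 1 - ε := by linarith
  set S : ℝ → ℝ := fun r =>
    ⨆ x : Metric.closedBall (0 : EuclideanSpace ℝ (Fin n)) r, ‖fderiv ℝ u x.1‖ with hSdef
  have hne : ∀ r : ℝ, 0 ≤ r → Nonempty (Metric.closedBall (0 : EuclideanSpace ℝ (Fin n)) r) :=
    fun r hr => ⟨⟨0, Metric.mem_closedBall_self hr⟩⟩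
  have hbdd : ∀ r : ℝ, BddAbove (Set.range fun x : Metric.closedBall (0 : EuclideanSpace ℝ (Fin n)) r =>
      ‖fderiv ℝ u x.1‖) := by
    intro r
    refine ⟨1, ?_⟩
    rintro _ ⟨x, rfl⟩
    exact hgrad_le x.1
  have hSle1 : ∀ r : ℝ, 0 ≤ r → S r ≤ 1 := by
    intro r hr
    haveI := hne r hr
    exact ciSup_le fun x => hgrad_le x.1
  have hSge : ∀ r : ℝ, ∀ x ∈ Metric.closedBall (0 : EuclideanSpace ℝ (Fin n)) r,
      ‖fderiv ℝ u x‖ ≤ S r := by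
    intro r x hx
    exact le_ciSup (hbdd r) (⟨x, hx⟩ : Metric.closedBall (0 : EuclideanSpace ℝ (Fin n)) r)
  have hS0 : ∀ r : ℝ, 0 ≤ r → 0 ≤ S r := by
    intro r hr
    exact le_trans (norm_nonneg _) (hSge r 0 (Metric.mem_closedBall_self hr))
  have hu_le : ∀ r : ℝ, 0 ≤ r → ∀ x ∈ Metric.closedBall (0 : EuclideanSpace ℝ (Fin n)) r,
      |u x| ≤ S r * r := by
    intro r hr x hx
    have h1 : ‖u x - u 0‖ ≤ S r * ‖x - 0‖ :=
      (convex_closedBall (0:EuclideanSpace ℝ (Fin n)) r).norm_image_sub_le_of_norm_fderiv_le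
        (fun y _ => hdiff y) (fun y hy => hSge r y hy)
        (Metric.mem_closedBall_self hr) hx
    rw [h0, sub_zero, sub_zero] at h1
    calc |u x| = ‖u x‖ := rfl
      _ ≤ S r * ‖x‖ := h1
      _ ≤ S r * r := by
          have hxr : ‖x‖ ≤ r := by
            have := Metric.mem_closedBall.1 hx
            rwa [dist_zero_right] at this
          exact mul_le_mul_of_nonneg_left hxr (hS0 r hr)
  have key : ∀ M : ℝ, 0 < M → ∃ r : ℝ, 0 < r ∧ r ≤ 1 ∧ M * r ^ ((1:ℝ) - ε) < S r := by
    intro M hM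
    obtain ⟨r, ⟨hr0, hr1⟩, hlt⟩ := hblow M
    refine ⟨r, hr0, hr1, ?_⟩
    haveI := hne r hr0.le
    have hsup : (⨆ x : Metric.closedBall (0 : EuclideanSpace ℝ (Fin n)) r, |u x.1|) ≤ S r * r :=
      ciSup_le fun x => hu_le r hr0.le x.1 x.2
    have h2 : M * r ^ ((2:ℝ) - ε) < S r * r := lt_of_lt_of_le hlt hsup
    have hrw : r ^ ((2:ℝ) - ε) = r ^ ((1:ℝ) - ε) * r := by
      have he : (2:ℝ) - ε = (1 - ε) + 1 := by ring
      rw [he, Real.rpow_add hr0, Real.rpow_one]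
    rw [hrw, ← mul_assoc] at h2
    exact lt_of_mul_lt_mul_right h2 hr0.le
  -- selection of r_k
  have hsel : ∀ k : ℕ, ∃ rk : ℝ, 0 < rk ∧ rk ≤ 1 ∧ ((k:ℝ)+1) < S rk / rk ^ ((1:ℝ) - ε) ∧
      ∀ s : ℝ, rk ≤ s → s ≤ 1 → S s / s ^ ((1:ℝ) - ε) < 2 * (S rk / rk ^ ((1:ℝ) - ε)) := by
    intro k
    obtain ⟨r', hr'0, hr'1, hr'⟩ := key (2*((k:ℝ)+1)) (by positivity)
    have hp' : (0:ℝ) < r' ^ ((1:ℝ) - ε) := Real.rpow_pos_of_pos hr'0 _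
    have ht' : 2*((k:ℝ)+1) < S r' / r' ^ ((1:ℝ) - ε) := by
      rw [lt_div_iff₀ hp']
      exact hr'
    set A : Set ℝ := (fun s => S s / s ^ ((1:ℝ) - ε)) '' Set.Icc r' 1 with hA
    have hAne : A.Nonempty := ⟨_, ⟨r', ⟨le_refl _, hr'1⟩, rfl⟩⟩
    have hAbdd : BddAbove A := by
      refine ⟨1 / r' ^ ((1:ℝ) - ε), ?_⟩
      rintro _ ⟨s, hs, rfl⟩
      have hs0 : 0 < s := lt_of_lt_of_le hr'0 hs.1
      exact div_le_div₀ (by norm_num) (hSle1 s hs0.le) hp'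
        (Real.rpow_le_rpow hr'0.le hs.1 hε'.le)
    have hθt' : S r' / r' ^ ((1:ℝ) - ε) ≤ sSup A :=
      le_csSup hAbdd ⟨r', ⟨le_refl _, hr'1⟩, rfl⟩
    have hθpos : 0 < sSup A := lt_of_le_of_lt (by positivity) (lt_of_lt_of_le ht' hθt')
    obtain ⟨a, ⟨rk, hrk, rfl⟩, ha⟩ := exists_lt_of_lt_csSup hAne (half_lt_self hθpos)
    refine ⟨rk, lt_of_lt_of_le hr'0 hrk.1, hrk.2, ?_, ?_⟩
    · have ha' : sSup A / 2 < S rk / rk ^ ((1:ℝ) - ε) := ha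
      linarith
    · intro s hs1 hs2
      have : S s / s ^ ((1:ℝ) - ε) ≤ sSup A :=
        le_csSup hAbdd ⟨s, ⟨le_trans hrk.1 hs1, hs2⟩, rfl⟩
      have ha' : sSup A / 2 < S rk / rk ^ ((1:ℝ) - ε) := ha
      linarith
  choose r hr0 hr1 ht hmax using hsel
  have hppos : ∀ k : ℕ, 0 < (r k) ^ ((1:ℝ) - ε) := fun k => Real.rpow_pos_of_pos (hr0 k) _
  have ht' : ∀ k : ℕ, ((k:ℝ)+1) * (r k) ^ ((1:ℝ) - ε) < S (r k) := by
    intro k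
    exact (lt_div_iff₀ (hppos k)).1 (ht k)
  have hSpos : ∀ k : ℕ, 0 < S (r k) := by
    intro k
    have h1 := ht' k
    have h2 : (0:ℝ) ≤ (k:ℝ) := Nat.cast_nonneg k
    nlinarith [hppos k]
  refine ⟨r, hr0, ?_, ?_⟩
  · -- convergence to zero
    have hle : ∀ k : ℕ, r k ≤ (((k:ℝ)+1)⁻¹) ^ ((1-ε)⁻¹ : ℝ) := by
      intro k
      have h1 : (r k) ^ ((1:ℝ) - ε) < ((k:ℝ)+1)⁻¹ := by
        have h2 := ht' k
        have h3 := hSle1 (r k) (hr0 k).le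
        have hk : (0:ℝ) < (k:ℝ)+1 := by positivity
        rw [inv_eq_one_div, lt_div_iff₀ hk]
        nlinarith [hppos k]
      have h4 : ((r k) ^ ((1:ℝ) - ε)) ^ ((1-ε)⁻¹ : ℝ) ≤ (((k:ℝ)+1)⁻¹) ^ ((1-ε)⁻¹ : ℝ) :=
        Real.rpow_le_rpow (Real.rpow_nonneg (hr0 k).le _) h1.le (by positivity)
      calc r k = ((r k) ^ ((1:ℝ) - ε)) ^ ((1-ε)⁻¹ : ℝ) := by
            rw [← Real.rpow_mul (hr0 k).le, mul_inv_cancel₀ hε'.ne', Real.rpow_one]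
        _ ≤ _ := h4
    have hb : Tendsto (fun k : ℕ => (((k:ℝ)+1)⁻¹)) atTop (nhds 0) := by
      exact tendsto_one_div_add_atTop_nhds_zero_nat.congr (fun k => one_div _)
    have hc : Tendsto (fun y : ℝ => y ^ ((1-ε)⁻¹ : ℝ)) (nhds 0) (nhds 0) := by
      have h5 := (Real.continuousAt_rpow_const 0 ((1-ε)⁻¹ : ℝ) (Or.inr (by positivity))).tendsto
      simpa [Real.zero_rpow (by positivity : ((1-ε)⁻¹ : ℝ) ≠ 0)] using h5
    exact squeeze_zero (fun k => (hr0 k).le) hle (hc.comp hb)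
  · intro k
    constructor
    · have h1 := ht' k
      have h2 : (0:ℝ) ≤ (k:ℝ) := Nat.cast_nonneg k
      nlinarith [hppos k]
    · intro x
      set D := fderiv ℝ u ((r k) • x) with hD
      set L := (r k) • ContinuousLinearMap.id ℝ (EuclideanSpace ℝ (Fin n)) with hL
      set c := (r k) * S (r k) with hc
      have hcpos : 0 < c := mul_pos (hr0 k) (hSpos k)
      have hLd : HasFDerivAt (fun y : EuclideanSpace ℝ (Fin n) => (r k) • y) L x :=
        (hasFDerivAt_id x).const_smul (r k)
      have hDu : HasFDerivAt (fun y : EuclideanSpace ℝ (Fin n) => u ((r k) • y)) (D.comp L) x :=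
        (hdiff ((r k) • x)).hasFDerivAt.comp x hLd
      have hDiv : HasFDerivAt (fun y : EuclideanSpace ℝ (Fin n) => u ((r k) • y) / c)
          (c⁻¹ • (D.comp L)) x := by
        simpa [div_eq_mul_inv] using hDu.mul_const c⁻¹
      have hLnorm : ‖L‖ ≤ r k := by
        rw [hL]
        calc ‖(r k) • ContinuousLinearMap.id ℝ (EuclideanSpace ℝ (Fin n))‖
            ≤ ‖r k‖ * ‖ContinuousLinearMap.id ℝ (EuclideanSpace ℝ (Fin n))‖ :=
              norm_smul_le (r k) (ContinuousLinearMap.id ℝ (EuclideanSpace ℝ (Fin n)))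
          _ ≤ ‖r k‖ * 1 := by
              have h := ContinuousLinearMap.norm_id_le
                (𝕜 := ℝ) (E := EuclideanSpace ℝ (Fin n))
              exact mul_le_mul_of_nonneg_left h (norm_nonneg _)
          _ = r k := by rw [mul_one, Real.norm_eq_abs, abs_of_pos (hr0 k)]
      have hnorm : ‖fderiv ℝ (fun y : EuclideanSpace ℝ (Fin n) => u ((r k) • y) / c) x‖ ≤
          ‖D‖ / S (r k) := by
        rw [hDiv.fderiv]
        have e1 : ‖c⁻¹ • (D.comp L)‖ = ‖c⁻¹‖ * ‖D.comp L‖ := norm_smul c⁻¹ (D.comp L)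
        have e2 : ‖D.comp L‖ ≤ ‖D‖ * ‖L‖ := D.opNorm_comp_le L
        have e3 : ‖c⁻¹‖ = c⁻¹ := by
          rw [Real.norm_eq_abs, abs_of_pos (inv_pos.2 hcpos)]
        have e4 : ‖c⁻¹‖ * ‖D.comp L‖ ≤ c⁻¹ * (‖D‖ * r k) := by
          rw [e3]
          refine mul_le_mul_of_nonneg_left ?_ (inv_pos.2 hcpos).le
          exact le_trans e2 (mul_le_mul_of_nonneg_left hLnorm (norm_nonneg _))
        have e5 : c⁻¹ * (‖D‖ * r k) = ‖D‖ / S (r k) := by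
          rw [hc, mul_inv]
          calc (r k)⁻¹ * (S (r k))⁻¹ * (‖D‖ * r k)
              = ((r k)⁻¹ * r k) * (‖D‖ * (S (r k))⁻¹) := by ring
            _ = ‖D‖ / S (r k) := by
                rw [inv_mul_cancel₀ (hr0 k).ne', one_mul, div_eq_mul_inv]
        rw [e1, ← e5]
        exact e4
      refine le_trans hnorm ?_
      rw [div_le_iff₀ (hSpos k)]
      have hq : (0:ℝ) ≤ ‖x‖ ^ ((1:ℝ) - ε) := Real.rpow_nonneg (norm_nonneg x) _
      rcases le_or_gt ‖x‖ 1 with hx1 | hx1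
      · -- small x
        have hmem : (r k) • x ∈ Metric.closedBall (0 : EuclideanSpace ℝ (Fin n)) (r k) := by
          rw [Metric.mem_closedBall, dist_zero_right, norm_smul, Real.norm_eq_abs,
            abs_of_pos (hr0 k)]
          nlinarith [hr0 k]
        have hD1 : ‖D‖ ≤ S (r k) := hSge (r k) _ hmem
        nlinarith [hSpos k, mul_nonneg hq (hSpos k).le]
      · rcases le_or_gt ((r k) * ‖x‖) 1 with hs1 | hs1
        · -- intermediate x
          have hss : r k ≤ (r k) * ‖x‖ := by nlinarith [hr0 k]
          have hmem : (r k) • x ∈ Metric.closedBall (0 : EuclideanSpace ℝ (Fin n)) ((r k) * ‖x‖) := by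
            rw [Metric.mem_closedBall, dist_zero_right, norm_smul, Real.norm_eq_abs,
              abs_of_pos (hr0 k)]
          have hDs : ‖D‖ ≤ S ((r k) * ‖x‖) := hSge _ _ hmem
          have hmax' := hmax k ((r k) * ‖x‖) hss hs1
          have hspos : (0:ℝ) < ((r k) * ‖x‖) ^ ((1:ℝ) - ε) :=
            Real.rpow_pos_of_pos (by nlinarith [hr0 k]) _
          have h6 : S ((r k) * ‖x‖) < 2 * (S (r k) / (r k) ^ ((1:ℝ) - ε)) *
              ((r k) * ‖x‖) ^ ((1:ℝ) - ε) := by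
            have := (div_lt_iff₀ hspos).1 hmax'
            linarith
          have h7 : ((r k) * ‖x‖) ^ ((1:ℝ) - ε) =
              (r k) ^ ((1:ℝ) - ε) * ‖x‖ ^ ((1:ℝ) - ε) :=
            Real.mul_rpow (hr0 k).le (norm_nonneg x)
          have h8 : 2 * (S (r k) / (r k) ^ ((1:ℝ) - ε)) *
              ((r k) ^ ((1:ℝ) - ε) * ‖x‖ ^ ((1:ℝ) - ε)) =
              2 * S (r k) * ‖x‖ ^ ((1:ℝ) - ε) := by
            have hce : S (r k) / (r k) ^ ((1:ℝ) - ε) * (r k) ^ ((1:ℝ) - ε) = S (r k) :=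
              div_mul_cancel₀ _ (hppos k).ne'
            calc 2 * (S (r k) / (r k) ^ ((1:ℝ) - ε)) *
                ((r k) ^ ((1:ℝ) - ε) * ‖x‖ ^ ((1:ℝ) - ε))
                = 2 * (S (r k) / (r k) ^ ((1:ℝ) - ε) * (r k) ^ ((1:ℝ) - ε)) *
                  ‖x‖ ^ ((1:ℝ) - ε) := by ring
              _ = 2 * S (r k) * ‖x‖ ^ ((1:ℝ) - ε) := by rw [hce]
          rw [h7, h8] at h6
          nlinarith [hSpos k]
        · -- large x
          have hD1 : ‖D‖ ≤ 1 := hgrad_le _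
          have h1' : (1:ℝ) ≤ ((r k) * ‖x‖) ^ ((1:ℝ) - ε) :=
            Real.one_le_rpow hs1.le hε'.le
          have h7 : ((r k) * ‖x‖) ^ ((1:ℝ) - ε) =
              (r k) ^ ((1:ℝ) - ε) * ‖x‖ ^ ((1:ℝ) - ε) :=
            Real.mul_rpow (hr0 k).le (norm_nonneg x)
          have ht1 : (1:ℝ) ≤ S (r k) / (r k) ^ ((1:ℝ) - ε) := by
            have h2 : (0:ℝ) ≤ (k:ℝ) := Nat.cast_nonneg k
            linarith [ht k]
          have hSrk : (S (r k) / (r k) ^ ((1:ℝ) - ε)) * (r k) ^ ((1:ℝ) - ε) = S (r k) :=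
            div_mul_cancel₀ _ (hppos k).ne'
          have hkey : (1:ℝ) ≤ S (r k) * ‖x‖ ^ ((1:ℝ) - ε) := by
            have h9 : (1:ℝ) * 1 ≤ (S (r k) / (r k) ^ ((1:ℝ) - ε)) *
                (((r k) * ‖x‖) ^ ((1:ℝ) - ε)) :=
              mul_le_mul ht1 h1' zero_le_one (le_trans zero_le_one ht1)
            calc (1:ℝ) = 1 * 1 := by ring
              _ ≤ (S (r k) / (r k) ^ ((1:ℝ) - ε)) * (((r k) * ‖x‖) ^ ((1:ℝ) - ε)) := h9
              _ = S (r k) * ‖x‖ ^ ((1:ℝ) - ε) := by rw [h7, ← mul_assoc, hSrk]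
          nlinarith [hSpos k]
end

section
/- Let 0 < β ≤ β₀ < Υ < 1, ν ∈ S^{n−1}, and u ∈ C(B₁). For r ∈ (0,1) define Q*(r) = (∫_{B_r} u(x)·((x·ν)₊)^β dx) / (∫_{B_r} ((x·ν)₊)^{2β} dx) and φ_r(x) = Q*(r)·((x·ν)₊)^β. Assume there is C₀ > 0 such that ‖u − φ_r‖_{L^∞(B_r)} ≤ C₀·r^Υ for all r ∈ (0,1). Then there exists Q ∈ ℝ with |Q| ≤ C·(C₀ + ‖u‖_{L^∞(B₁)}) such that ‖u − Q·((x·ν)₊)^β‖_{L^∞(B_r)} ≤ C·C₀·r^Υ for all r ∈ (0,1), where C depends only on Υ and β₀. -/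
open Real MeasureTheory

set_option maxHeartbeats 1000000 in
/-- Lemma 7.8 (Lemma 5.3 of Ros-Oton–Serra): if `u` is approximated at every
scale `r ∈ (0,1)` by its `L²(B_r)`-best multiple `Q*(r)((x·ν)₊)^β` with error
`C₀ r^Υ`, then there is a single `Q`, with `|Q| ≤ C(C₀ + ‖u‖_{L^∞(B₁)})`, such
that `‖u - Q((x·ν)₊)^β‖_{L^∞(B_r)} ≤ C C₀ r^Υ` for all `r ∈ (0,1)`, where `C`
depends only on `Υ` and `β₀`. -/
theorem single_blowup_coefficient (Υ β₀ : ℝ) (hβ₀ : 0 < β₀) (hβ₀Υ : β₀ < Υ) (hΥ : Υ < 1) :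
    ∃ C : ℝ, 0 < C ∧
      ∀ (n : ℕ) (ν : EuclideanSpace ℝ (Fin n)), ‖ν‖ = 1 →
      ∀ (u : EuclideanSpace ℝ (Fin n) → ℝ),
        ContinuousOn u (Metric.closedBall 0 1) →
      ∀ (β C₀ : ℝ), 0 < β → β ≤ β₀ → 0 < C₀ →
      (∀ r ∈ Set.Ioo (0 : ℝ) 1, ∀ x ∈ Metric.ball (0 : EuclideanSpace ℝ (Fin n)) r,
        |u x -
          ((∫ y in Metric.ball (0 : EuclideanSpace ℝ (Fin n)) r,
              u y * (max (inner ℝ ν y : ℝ) 0) ^ β) /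
           (∫ y in Metric.ball (0 : EuclideanSpace ℝ (Fin n)) r,
              (max (inner ℝ ν y : ℝ) 0) ^ (2 * β))) *
          (max (inner ℝ ν x : ℝ) 0) ^ β| ≤ C₀ * r ^ Υ) →
      ∃ Q : ℝ,
        |Q| ≤ C * (C₀ + ⨆ x : Metric.ball (0 : EuclideanSpace ℝ (Fin n)) 1, |u x.1|) ∧
        ∀ r ∈ Set.Ioo (0 : ℝ) 1, ∀ x ∈ Metric.ball (0 : EuclideanSpace ℝ (Fin n)) r,
          |u x - Q * (max (inner ℝ ν x : ℝ) 0) ^ β| ≤ C * C₀ * r ^ Υ := by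
  have hΥ0 : 0 < Υ := hβ₀.trans hβ₀Υ
  set ρ₀ : ℝ := (2 : ℝ) ^ (β₀ - Υ) with hρ₀def
  have hρ₀pos : 0 < ρ₀ := Real.rpow_pos_of_pos two_pos _
  have hρ₀lt : ρ₀ < 1 := Real.rpow_lt_one_of_one_lt_of_neg one_lt_two (by linarith)
  have h1ρ₀ : 0 < 1 - ρ₀ := by linarith
  have hinvpos : 0 < (1 - ρ₀)⁻¹ := inv_pos.2 h1ρ₀
  have ht1 : 1 ≤ (1 - ρ₀)⁻¹ := (one_le_inv₀ h1ρ₀).2 (by linarith)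
  clear_value ρ₀
  refine ⟨16 + 64 * (1 - ρ₀)⁻¹, by linarith, ?_⟩
  intro n ν hν u hu β C₀ hβ hββ₀ hC₀ happ
  have hβ1 : β < 1 := lt_of_le_of_lt hββ₀ (hβ₀Υ.trans hΥ)
  have hδpos : 0 < Υ - β := by linarith
  set q : ℝ → ℝ := fun r =>
      (∫ y in Metric.ball (0 : EuclideanSpace ℝ (Fin n)) r,
          u y * (max (inner ℝ ν y : ℝ) 0) ^ β) /
      (∫ y in Metric.ball (0 : EuclideanSpace ℝ (Fin n)) r,
          (max (inner ℝ ν y : ℝ) 0) ^ (2 * β)) with hqdef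
  have happ' : ∀ r ∈ Set.Ioo (0 : ℝ) 1, ∀ x ∈ Metric.ball (0 : EuclideanSpace ℝ (Fin n)) r,
      |u x - q r * (max (inner ℝ ν x : ℝ) 0) ^ β| ≤ C₀ * r ^ Υ := happ
  clear happ
  clear_value q
  -- basic facts about the test points t • ν
  have hxν : ∀ t : ℝ, (inner ℝ ν (t • ν) : ℝ) = t := by
    intro t
    rw [real_inner_smul_right, real_inner_self_eq_norm_sq, hν]; ring
  have hxnorm : ∀ t : ℝ, 0 ≤ t → ‖(t • ν : EuclideanSpace ℝ (Fin n))‖ = t := by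
    intro t ht
    rw [norm_smul, hν, mul_one, Real.norm_eq_abs, abs_of_nonneg ht]
  -- key scale-comparison estimate
  have key : ∀ r ∈ Set.Ioo (0 : ℝ) 1, ∀ s : ℝ, 0 < s → s ≤ r →
      |q r - q s| * (s / 2) ^ β ≤ 2 * C₀ * r ^ Υ := by
    intro r hr s hs hsr
    have hs2 : 0 < s / 2 := by linarith
    have hmem : (s / 2) • ν ∈ Metric.ball (0 : EuclideanSpace ℝ (Fin n)) s := by
      rw [Metric.mem_ball, dist_zero_right, hxnorm _ hs2.le]; linarith
    have hmem' : (s / 2) • ν ∈ Metric.ball (0 : EuclideanSpace ℝ (Fin n)) r :=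
      Metric.ball_subset_ball hsr hmem
    have h1 := happ' r hr _ hmem'
    have h2 := happ' s ⟨hs, lt_of_le_of_lt hsr hr.2⟩ _ hmem
    rw [hxν, max_eq_left hs2.le] at h1 h2
    have hsΥ : s ^ Υ ≤ r ^ Υ := Real.rpow_le_rpow hs.le hsr hΥ0.le
    have habs : |q r - q s| * (s / 2) ^ β =
        |(u ((s / 2) • ν) - q s * (s / 2) ^ β) - (u ((s / 2) • ν) - q r * (s / 2) ^ β)| := by
      rw [show (u ((s / 2) • ν) - q s * (s / 2) ^ β) - (u ((s / 2) • ν) - q r * (s / 2) ^ β)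
            = (q r - q s) * (s / 2) ^ β by ring,
          abs_mul, abs_of_nonneg (Real.rpow_nonneg hs2.le β)]
    rw [habs]
    calc |(u ((s / 2) • ν) - q s * (s / 2) ^ β) - (u ((s / 2) • ν) - q r * (s / 2) ^ β)|
        ≤ |u ((s / 2) • ν) - q s * (s / 2) ^ β| + |u ((s / 2) • ν) - q r * (s / 2) ^ β| :=
          abs_sub _ _
      _ ≤ C₀ * s ^ Υ + C₀ * r ^ Υ := add_le_add h2 h1
      _ ≤ 2 * C₀ * r ^ Υ := by nlinarith
  -- powers of 1/2
  have hppos : ∀ m : ℕ, (0 : ℝ) < (2 : ℝ)⁻¹ ^ m := fun m => pow_pos (by norm_num) m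
  have hple : ∀ m l : ℕ, m ≤ l → ((2 : ℝ)⁻¹ ^ l : ℝ) ≤ (2 : ℝ)⁻¹ ^ m := fun m l h =>
    pow_le_pow_of_le_one (by norm_num) (by norm_num) h
  have hplt1 : ∀ m : ℕ, ((2 : ℝ)⁻¹ ^ (m + 1) : ℝ) < 1 := by
    intro m
    have := hple 1 (m + 1) (by omega)
    have h12 : ((2 : ℝ)⁻¹ ^ 1 : ℝ) = 1 / 2 := by norm_num
    linarith [h12 ▸ this]
  have hp2 : ∀ m : ℕ, ((2 : ℝ)⁻¹ ^ m : ℝ) = (2 : ℝ) ^ (-(m : ℝ)) := by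
    intro m
    rw [Real.rpow_neg (by norm_num : (0:ℝ) ≤ 2), Real.rpow_natCast, inv_pow]
  have hpc : ∀ (m : ℕ) (c : ℝ), ((2 : ℝ)⁻¹ ^ m : ℝ) ^ c = (2 : ℝ) ^ (-((m : ℝ) * c)) := by
    intro m c
    rw [hp2, ← Real.rpow_mul (by norm_num : (0:ℝ) ≤ 2)]
    congr 1
    ring
  set ρ : ℝ := (2 : ℝ) ^ (β - Υ) with hρdef
  have hρpos : 0 < ρ := Real.rpow_pos_of_pos two_pos _
  have hρlt : ρ < 1 := Real.rpow_lt_one_of_one_lt_of_neg one_lt_two (by linarith)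
  have hρρ₀ : ρ ≤ ρ₀ := by
    rw [hρ₀def]
    exact Real.rpow_le_rpow_of_exponent_le one_le_two (by linarith)
  have hρk : ∀ k : ℕ, (ρ ^ k : ℝ) = (2 : ℝ) ^ ((k : ℝ) * (β - Υ)) := by
    intro k
    rw [hρdef, ← Real.rpow_natCast ((2 : ℝ) ^ (β - Υ)) k,
      ← Real.rpow_mul (by norm_num : (0:ℝ) ≤ 2), mul_comm]
  have hinvcmp : (1 - ρ)⁻¹ ≤ (1 - ρ₀)⁻¹ := inv_anti₀ h1ρ₀ (by linarith)
  clear_value ρ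
  -- the dyadic sequence of coefficients
  set f : ℕ → ℝ := fun j => q ((2 : ℝ)⁻¹ ^ (j + 1)) with hfdef
  clear_value f
  have hdiv : ∀ m : ℕ, ((2 : ℝ)⁻¹ ^ m : ℝ) / 2 = (2 : ℝ)⁻¹ ^ (m + 1) := by
    intro m; rw [pow_succ]; ring
  have hstep : ∀ j : ℕ, dist (f j) (f (j + 1)) ≤ (16 * C₀) * ρ ^ j := by
    intro j
    have hk := key ((2 : ℝ)⁻¹ ^ (j + 1)) ⟨hppos _, hplt1 _⟩ ((2 : ℝ)⁻¹ ^ (j + 2)) (hppos _)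
      (hple (j + 1) (j + 2) (by omega))
    rw [hdiv] at hk
    rw [Real.dist_eq]
    simp only [hfdef, show ∀ m : ℕ, m + 1 + 1 = m + 2 from fun m => rfl]
    have hP : (0 : ℝ) < ((2 : ℝ)⁻¹ ^ (j + 3) : ℝ) ^ β := Real.rpow_pos_of_pos (hppos _) _
    refine le_of_mul_le_mul_right (hk.trans ?_) hP
    -- 2 C₀ 2^{-(j+1)Υ} ≤ 16 C₀ ρ^j 2^{-(j+3)β}
    rw [hpc, hpc, hρk]
    have hX : (2 : ℝ) ^ (-(((j + 1 : ℕ) : ℝ) * Υ)) ≤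
        8 * ((2 : ℝ) ^ ((j : ℝ) * (β - Υ)) * (2 : ℝ) ^ (-(((j + 3 : ℕ) : ℝ) * β))) := by
      have h8 : (8 : ℝ) = (2 : ℝ) ^ (3 : ℝ) := by
        rw [show (3 : ℝ) = ((3 : ℕ) : ℝ) by norm_num, Real.rpow_natCast]; norm_num
      rw [h8, ← Real.rpow_add two_pos, ← Real.rpow_add two_pos]
      refine Real.rpow_le_rpow_of_exponent_le one_le_two ?_
      push_cast
      nlinarith [hβ.le, hΥ0.le]
    have h2C₀ : (0 : ℝ) ≤ 2 * C₀ := by linarith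
    have := mul_le_mul_of_nonneg_left hX h2C₀
    linarith [this]
  have hcauchy : CauchySeq f := cauchySeq_of_le_geometric ρ (16 * C₀) hρlt hstep
  obtain ⟨Q, hQlim⟩ := cauchySeq_tendsto_of_complete hcauchy
  have hdistQ : ∀ k, dist (f k) Q ≤ 16 * C₀ * ρ ^ k / (1 - ρ) :=
    fun k => dist_le_of_le_geometric_of_tendsto ρ (16 * C₀) hρlt hstep hQlim k
  -- the sup bound
  obtain ⟨B, hB⟩ := (isCompact_closedBall (0 : EuclideanSpace ℝ (Fin n)) 1).exists_bound_of_continuousOn hu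
  have hbdd : BddAbove (Set.range fun x : Metric.ball (0 : EuclideanSpace ℝ (Fin n)) 1 => |u x.1|) := by
    refine ⟨B, ?_⟩
    rintro y ⟨x, rfl⟩
    simpa using hB x.1 (Metric.ball_subset_closedBall x.2)
  set M := ⨆ x : Metric.ball (0 : EuclideanSpace ℝ (Fin n)) 1, |u x.1| with hMdef
  have hM : ∀ x ∈ Metric.ball (0 : EuclideanSpace ℝ (Fin n)) 1, |u x| ≤ M := fun x hx =>
    le_ciSup hbdd (⟨x, hx⟩ : Metric.ball (0 : EuclideanSpace ℝ (Fin n)) 1)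
  have hM0 : 0 ≤ M := le_trans (abs_nonneg _) (hM 0 (Metric.mem_ball_self one_pos))
  clear_value M
  refine ⟨Q, ?_, ?_⟩
  · -- bound on |Q|
    have hf0 : |f 0 - Q| ≤ 16 * C₀ / (1 - ρ) := by
      have := hdistQ 0
      rwa [Real.dist_eq, pow_zero, mul_one] at this
    have hf0b : |f 0| ≤ 4 * (M + C₀) := by
      have hmem : ((4 : ℝ)⁻¹) • ν ∈ Metric.ball (0 : EuclideanSpace ℝ (Fin n)) ((2 : ℝ)⁻¹ ^ (0 + 1)) := by
        rw [Metric.mem_ball, dist_zero_right, hxnorm _ (by norm_num)]; norm_num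
      have h1 := happ' ((2 : ℝ)⁻¹ ^ (0 + 1)) ⟨hppos _, hplt1 _⟩ _ hmem
      rw [hxν, max_eq_left (by norm_num : (0:ℝ) ≤ (4:ℝ)⁻¹)] at h1
      have hrΥ : (((2 : ℝ)⁻¹ ^ (0 + 1) : ℝ)) ^ Υ ≤ 1 :=
        Real.rpow_le_one (by norm_num) (by norm_num) hΥ0.le
      have hmem1 : ((4 : ℝ)⁻¹) • ν ∈ Metric.ball (0 : EuclideanSpace ℝ (Fin n)) 1 :=
        Metric.ball_subset_ball (le_of_lt (hplt1 0)) hmem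
      have hMx := hM _ hmem1
      have h4β : (4 : ℝ)⁻¹ ≤ ((4 : ℝ)⁻¹) ^ β := by
        have := Real.rpow_le_rpow_of_exponent_ge (by norm_num : (0:ℝ) < (4:ℝ)⁻¹)
          (by norm_num : (4:ℝ)⁻¹ ≤ 1) hβ1.le
        simpa [Real.rpow_one] using this
      have htri : |f 0 * ((4 : ℝ)⁻¹) ^ β| ≤
          |u (((4 : ℝ)⁻¹) • ν)| + |u (((4 : ℝ)⁻¹) • ν) - f 0 * ((4 : ℝ)⁻¹) ^ β| := by
        have h' := abs_sub (u (((4 : ℝ)⁻¹) • ν)) (u (((4 : ℝ)⁻¹) • ν) - f 0 * ((4 : ℝ)⁻¹) ^ β)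
        rw [show u (((4 : ℝ)⁻¹) • ν) - (u (((4 : ℝ)⁻¹) • ν) - f 0 * ((4 : ℝ)⁻¹) ^ β)
              = f 0 * ((4 : ℝ)⁻¹) ^ β by ring] at h'
        exact h'
      have hfq : f 0 = q ((2 : ℝ)⁻¹ ^ (0 + 1)) := by rw [hfdef]
      rw [← hfq] at h1
      rw [abs_mul, abs_of_nonneg (Real.rpow_nonneg (by norm_num : (0:ℝ) ≤ (4:ℝ)⁻¹) β)] at htri
      have h14 : |f 0| * (4 : ℝ)⁻¹ ≤ M + C₀ := by
        have hle : |f 0| * (4 : ℝ)⁻¹ ≤ |f 0| * ((4 : ℝ)⁻¹) ^ β :=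
          mul_le_mul_of_nonneg_left h4β (abs_nonneg _)
        nlinarith [h1, hMx, htri, hrΥ, hC₀.le]
      linarith
    have hf0Q : 16 * C₀ / (1 - ρ) ≤ 16 * C₀ * (1 - ρ₀)⁻¹ := by
      rw [div_eq_mul_inv]
      exact mul_le_mul_of_nonneg_left hinvcmp (by linarith)
    have habsQ : |Q| ≤ |f 0| + |f 0 - Q| := by
      have h' := abs_sub (f 0) (f 0 - Q)
      rw [show f 0 - (f 0 - Q) = Q by ring] at h'
      exact h'
    clear hM hbdd hB happ' key hdistQ hstep hcauchy hQlim hxν hxnorm hdiv hqdef hMdef hfdef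
      hpc hp2 hρk hplt1 hppos hple hu q u ν hν
    have e2 : 0 ≤ (1 - ρ₀)⁻¹ * C₀ := mul_nonneg hinvpos.le hC₀.le
    have e3 : 0 ≤ (1 - ρ₀)⁻¹ * M := mul_nonneg hinvpos.le hM0
    nlinarith [e2, e3, habsQ, hf0, hf0b, hf0Q, ht1, hC₀.le, hM0]
  · -- the main estimate
    intro r hr x hx
    have hr0 : 0 < r := hr.1
    have hPex : ∃ k : ℕ, (2 : ℝ)⁻¹ ^ (k + 1) ≤ r := by
      obtain ⟨m, hm⟩ := exists_pow_lt_of_lt_one hr0 (by norm_num : (2:ℝ)⁻¹ < 1)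
      exact ⟨m, le_of_lt (lt_of_le_of_lt (hple m (m + 1) (by omega)) hm)⟩
    obtain ⟨k, hk1, hk2⟩ : ∃ k : ℕ, (2 : ℝ)⁻¹ ^ (k + 1) ≤ r ∧ r < (2 : ℝ)⁻¹ ^ k := by
      refine ⟨Nat.find hPex, Nat.find_spec hPex, ?_⟩
      rcases Nat.eq_zero_or_pos (Nat.find hPex) with h0 | hpos
      · rw [h0]; simpa using hr.2
      · obtain ⟨k', hk'⟩ := Nat.exists_eq_succ_of_ne_zero (Nat.pos_iff_ne_zero.mp hpos)
        have hmin := Nat.find_min hPex (show k' < Nat.find hPex by omega)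
        push_neg at hmin
        rw [hk']
        exact hmin
    -- estimate |q r - f k| (r/4)^β ≤ 2 C₀ r^Υ
    have hs := key r hr ((2 : ℝ)⁻¹ ^ (k + 1)) (hppos _) hk1
    rw [hdiv] at hs
    have hr4 : r / 4 ≤ (2 : ℝ)⁻¹ ^ (k + 2) := by
      have he : ((2 : ℝ)⁻¹ ^ (k + 2) : ℝ) = (2 : ℝ)⁻¹ ^ k / 4 := by
        rw [pow_succ, pow_succ]; ring
      rw [he]; linarith
    have hr8β : (r / 4) ^ β ≤ ((2 : ℝ)⁻¹ ^ (k + 2) : ℝ) ^ β :=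
      Real.rpow_le_rpow (by linarith : (0:ℝ) ≤ r / 4) hr4 hβ.le
    have hA : |q r - q ((2 : ℝ)⁻¹ ^ (k + 1))| * (r / 4) ^ β ≤ 2 * C₀ * r ^ Υ :=
      le_trans (mul_le_mul_of_nonneg_left hr8β (abs_nonneg _)) hs
    -- estimate |f k - Q| ≤ 32 C₀ (1-ρ₀)⁻¹ r^(Υ-β)
    have hfk : f k = q ((2 : ℝ)⁻¹ ^ (k + 1)) := by rw [hfdef]
    have hQk : |q ((2 : ℝ)⁻¹ ^ (k + 1)) - Q| ≤ 32 * C₀ * (1 - ρ₀)⁻¹ * r ^ (Υ - β) := by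
      have h1 := hdistQ k
      rw [Real.dist_eq, hfk] at h1
      have hρk2 : ρ ^ k ≤ 2 * r ^ (Υ - β) := by
        have e1 : (ρ : ℝ) ^ k = (((2 : ℝ)⁻¹ ^ k : ℝ)) ^ (Υ - β) := by
          rw [hρk, hpc]
          congr 1
          ring
        have e2 : ((2 : ℝ)⁻¹ ^ k : ℝ) ≤ 2 * r := by
          have he : ((2 : ℝ)⁻¹ ^ (k + 1) : ℝ) = (2 : ℝ)⁻¹ ^ k / 2 := by
            rw [pow_succ]; ring
          rw [he] at hk1; linarith
        calc (ρ : ℝ) ^ k = (((2 : ℝ)⁻¹ ^ k : ℝ)) ^ (Υ - β) := e1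
          _ ≤ (2 * r) ^ (Υ - β) :=
              Real.rpow_le_rpow (pow_nonneg (by norm_num) _) e2 hδpos.le
          _ = (2 : ℝ) ^ (Υ - β) * r ^ (Υ - β) := Real.mul_rpow (by norm_num) hr0.le
          _ ≤ 2 * r ^ (Υ - β) := by
              have h2d : (2 : ℝ) ^ (Υ - β) ≤ 2 := by
                nth_rewrite 2 [← Real.rpow_one 2]
                exact Real.rpow_le_rpow_of_exponent_le one_le_two (by linarith)
              exact mul_le_mul_of_nonneg_right h2d (Real.rpow_nonneg hr0.le _)
      have h2 : 16 * C₀ * ρ ^ k ≤ 32 * C₀ * r ^ (Υ - β) := by nlinarith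
      have h3 : 16 * C₀ * ρ ^ k / (1 - ρ) ≤ (32 * C₀ * r ^ (Υ - β)) * (1 - ρ₀)⁻¹ := by
        rw [div_eq_mul_inv]
        exact mul_le_mul h2 hinvcmp (inv_nonneg.2 (by linarith)) (by positivity)
      calc |q ((2 : ℝ)⁻¹ ^ (k + 1)) - Q| ≤ 16 * C₀ * ρ ^ k / (1 - ρ) := h1
        _ ≤ (32 * C₀ * r ^ (Υ - β)) * (1 - ρ₀)⁻¹ := h3
        _ = 32 * C₀ * (1 - ρ₀)⁻¹ * r ^ (Υ - β) := by ring
    -- put things together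
    have h0 := happ' r hr x hx
    have hhx0 : 0 ≤ (max (inner ℝ ν x : ℝ) 0) ^ β := Real.rpow_nonneg (le_max_right _ _) _
    have hhx : (max (inner ℝ ν x : ℝ) 0) ^ β ≤ r ^ β := by
      refine Real.rpow_le_rpow (le_max_right _ _) ?_ hβ.le
      have hxr : ‖x‖ < r := by
        rw [Metric.mem_ball, dist_zero_right] at hx
        exact hx
      have hin : (inner ℝ ν x : ℝ) ≤ r :=
        le_trans (le_trans (le_abs_self _) (abs_real_inner_le_norm ν x))
          (by rw [hν, one_mul]; exact hxr.le)
      exact max_le hin hr0.le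
    have htri : |u x - Q * (max (inner ℝ ν x : ℝ) 0) ^ β| ≤
        |u x - q r * (max (inner ℝ ν x : ℝ) 0) ^ β| +
          |q r - Q| * (max (inner ℝ ν x : ℝ) 0) ^ β := by
      have he : u x - Q * (max (inner ℝ ν x : ℝ) 0) ^ β =
          (u x - q r * (max (inner ℝ ν x : ℝ) 0) ^ β) +
            (q r - Q) * (max (inner ℝ ν x : ℝ) 0) ^ β := by ring
      rw [he]
      refine (abs_add_le _ _).trans ?_
      rw [abs_mul, abs_of_nonneg hhx0]
    have hsplit : |q r - Q| ≤ |q r - q ((2 : ℝ)⁻¹ ^ (k + 1))| + |q ((2 : ℝ)⁻¹ ^ (k + 1)) - Q| :=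
      abs_sub_le _ _ _
    -- term 1 against r^β
    have h4d : r ^ β = (r / 4) ^ β * (4 : ℝ) ^ β := by
      rw [← Real.mul_rpow (by linarith : (0:ℝ) ≤ r / 4) (by norm_num : (0:ℝ) ≤ (4:ℝ))]
      norm_num
    have h4b : (4 : ℝ) ^ β ≤ 4 := by
      nth_rewrite 2 [← Real.rpow_one 4]
      exact Real.rpow_le_rpow_of_exponent_le (by norm_num) hβ1.le
    have hterm1 : |q r - q ((2 : ℝ)⁻¹ ^ (k + 1))| * r ^ β ≤ 8 * C₀ * r ^ Υ := by
      rw [h4d, ← mul_assoc]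
      calc |q r - q ((2 : ℝ)⁻¹ ^ (k + 1))| * (r / 4) ^ β * (4 : ℝ) ^ β
          ≤ (2 * C₀ * r ^ Υ) * (4 : ℝ) ^ β :=
            mul_le_mul_of_nonneg_right hA (Real.rpow_nonneg (by norm_num) _)
        _ ≤ (2 * C₀ * r ^ Υ) * 4 := mul_le_mul_of_nonneg_left h4b (by positivity)
        _ = 8 * C₀ * r ^ Υ := by ring
    have hterm2 : |q ((2 : ℝ)⁻¹ ^ (k + 1)) - Q| * r ^ β ≤ 32 * C₀ * (1 - ρ₀)⁻¹ * r ^ Υ := by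
      calc |q ((2 : ℝ)⁻¹ ^ (k + 1)) - Q| * r ^ β
          ≤ (32 * C₀ * (1 - ρ₀)⁻¹ * r ^ (Υ - β)) * r ^ β :=
            mul_le_mul_of_nonneg_right hQk (Real.rpow_nonneg hr0.le _)
        _ = 32 * C₀ * (1 - ρ₀)⁻¹ * r ^ Υ := by
            rw [mul_assoc, ← Real.rpow_add hr0, sub_add_cancel]
    have hqrQ : |q r - Q| * (max (inner ℝ ν x : ℝ) 0) ^ β ≤
        |q r - q ((2 : ℝ)⁻¹ ^ (k + 1))| * r ^ β + |q ((2 : ℝ)⁻¹ ^ (k + 1)) - Q| * r ^ β := by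
      calc |q r - Q| * (max (inner ℝ ν x : ℝ) 0) ^ β ≤ |q r - Q| * r ^ β :=
            mul_le_mul_of_nonneg_left hhx (abs_nonneg _)
        _ ≤ (|q r - q ((2 : ℝ)⁻¹ ^ (k + 1))| + |q ((2 : ℝ)⁻¹ ^ (k + 1)) - Q|) * r ^ β :=
            mul_le_mul_of_nonneg_right hsplit (Real.rpow_nonneg hr0.le _)
        _ = |q r - q ((2 : ℝ)⁻¹ ^ (k + 1))| * r ^ β + |q ((2 : ℝ)⁻¹ ^ (k + 1)) - Q| * r ^ β := by
            ring
    have hrΥpos : 0 < r ^ Υ := Real.rpow_pos_of_pos hr0 _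
    clear hM hbdd hB happ' key hdistQ hstep hcauchy hQlim hxν hxnorm hdiv hqdef hMdef hfdef
      hpc hp2 hρk hplt1 hppos hple hu hs hA hQk hfk
    nlinarith [htri, h0, hqrQ, hterm1, hterm2, ht1,
      mul_nonneg (mul_nonneg hinvpos.le hC₀.le) hrΥpos.le,
      mul_nonneg hC₀.le hrΥpos.le]
end

section
/- Let b ∈ ℝⁿ, c̄ > 0, x̄ ∈ ℝⁿ, r > 0, and let ū ∈ C²(B_r(x̄)) ∩ C(B̄_r(x̄)) satisfy ū ≥ 0, (Δ + ∂²_{bb}) ū ≥ c̄ in Ω_r := {ū > 0} ∩ B_r(x̄), and ū(x̄) > 0. Then sup_{∂B_r(x̄)} ū ≥ c·r², where c = c̄/(2(n + ‖b‖²)). -/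
open Real Metric

open Filter Set in
open scoped RealInnerProductSpace in
private lemma deriv2_nonpos_of_isLocalMax' {g : ℝ → ℝ} {a : ℝ}
    (hg : ∀ᶠ t in nhds (0:ℝ), DifferentiableAt ℝ g t)
    (hmax : IsLocalMax g 0) (ha : HasDerivAt (deriv g) a 0) : a ≤ 0 := by
  by_contra hlt
  push_neg at hlt
  have h0 : deriv g 0 = 0 := hmax.deriv_eq_zero
  have hslope : Tendsto (slope (deriv g) 0) (nhdsWithin 0 {(0:ℝ)}ᶜ) (nhds a) :=
    hasDerivAt_iff_tendsto_slope.mp ha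
  have hev : ∀ᶠ t in nhdsWithin 0 {(0:ℝ)}ᶜ, 0 < slope (deriv g) 0 t :=
    hslope.eventually (eventually_gt_nhds hlt)
  have hev' : ∀ᶠ t in nhdsWithin 0 {(0:ℝ)}ᶜ, 0 < deriv g t / t := by
    filter_upwards [hev] with t ht
    simpa [slope_def_field, h0] using ht
  have hcmb : ∀ᶠ t in nhdsWithin 0 {(0:ℝ)}ᶜ,
      (0 < deriv g t / t ∧ DifferentiableAt ℝ g t) ∧ g t ≤ g 0 :=
    hev'.and ((hg.and hmax).filter_mono nhdsWithin_le_nhds) |>.mono (by tauto)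
  rw [eventually_nhdsWithin_iff, Metric.eventually_nhds_iff] at hcmb
  obtain ⟨δ, hδ, H⟩ := hcmb
  set t0 := δ/2 with ht0
  have ht0pos : 0 < t0 := by positivity
  have hmem : ∀ t ∈ Icc (0:ℝ) t0, dist t 0 < δ := by
    intro t ht
    rw [Real.dist_eq, sub_zero, abs_of_nonneg ht.1]
    have := ht.2; simp only [ht0] at this ⊢; linarith
  have hcont : ContinuousOn g (Icc 0 t0) := by
    intro t ht
    rcases eq_or_ne t 0 with rfl | htne
    · exact (hg.self_of_nhds).continuousAt.continuousWithinAt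
    · exact ((H (hmem t ht) htne).1.2).continuousAt.continuousWithinAt
  have hderiv : ∀ t ∈ interior (Icc (0:ℝ) t0), 0 < deriv g t := by
    intro t ht
    rw [interior_Icc] at ht
    have htne : t ≠ 0 := ne_of_gt ht.1
    have h1 := (H (hmem t ⟨ht.1.le, ht.2.le⟩) htne).1.1
    have := mul_pos h1 ht.1
    rwa [div_mul_cancel₀ _ (ne_of_gt ht.1)] at this
  have hmono := strictMonoOn_of_deriv_pos (convex_Icc 0 t0) hcont hderiv
  have h1 : g 0 < g t0 := hmono (left_mem_Icc.mpr ht0pos.le) (right_mem_Icc.mpr ht0pos.le) ht0pos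
  have h2 : g t0 ≤ g 0 := (H (hmem t0 (right_mem_Icc.mpr ht0pos.le)) (ne_of_gt ht0pos)).2
  linarith

open Filter Set in
private lemma second_dir_deriv_nonpos' {E : Type*} [NormedAddCommGroup E] [NormedSpace ℝ E]
    {f : E → ℝ} {s : Set E}
    (hs : IsOpen s) (hf : ContDiffOn ℝ 2 f s) {x0 : E} (hx0 : x0 ∈ s)
    (hmax : IsLocalMax f x0) (w : E) :
    fderiv ℝ (fun y => fderiv ℝ f y w) x0 w ≤ 0 := by
  set F : E → ℝ := fun y => fderiv ℝ f y w with hF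
  have h1 : ContDiffOn ℝ 1 (fun y => fderiv ℝ f y) s :=
    hf.fderiv_of_isOpen hs (by norm_num)
  have hFc : ContDiffOn ℝ 1 F s := h1.clm_apply contDiffOn_const
  have hFd : ∀ y ∈ s, DifferentiableAt ℝ F y := fun y hy =>
    ((hFc.differentiableOn one_ne_zero).differentiableAt (hs.mem_nhds hy))
  have hfd : ∀ y ∈ s, DifferentiableAt ℝ f y := fun y hy =>
    ((hf.differentiableOn (by norm_num)).differentiableAt (hs.mem_nhds hy))
  set L : ℝ → E := fun t => x0 + t • w with hLdef
  have hL : ∀ t : ℝ, HasDerivAt L w t := by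
    intro t
    simpa [hLdef] using (((hasDerivAt_id t).smul_const w).const_add x0)
  have hLc : Continuous L := by fun_prop
  have hL0 : L 0 = x0 := by simp [hLdef]
  set g : ℝ → ℝ := f ∘ L with hgdef
  have hgmax : IsLocalMax g 0 := by
    apply IsLocalMax.comp_continuous _ hLc.continuousAt
    rwa [hL0]
  have hsnhd : L ⁻¹' s ∈ nhds (0:ℝ) :=
    (hs.preimage hLc).mem_nhds (by simp [hL0, hx0])
  have hgderiv : ∀ t ∈ L ⁻¹' s, HasDerivAt g (F (L t)) t := by
    intro t ht
    exact ((hfd (L t) ht).hasFDerivAt).comp_hasDerivAt t (hL t)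
  have hgdiff : ∀ᶠ t in nhds (0:ℝ), DifferentiableAt ℝ g t := by
    filter_upwards [hsnhd] with t ht
    exact (hgderiv t ht).differentiableAt
  have hev : deriv g =ᶠ[nhds (0:ℝ)] F ∘ L := by
    filter_upwards [hsnhd] with t ht
    exact (hgderiv t ht).deriv
  have hFL : HasDerivAt (F ∘ L) (fderiv ℝ F x0 w) 0 := by
    have h := (hL0 ▸ (hFd x0 hx0).hasFDerivAt :
      HasFDerivAt F (fderiv ℝ F x0) (L 0)).comp_hasDerivAt 0 (hL 0)
    exact h
  have hdd : HasDerivAt (deriv g) (fderiv ℝ F x0 w) 0 :=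
    hFL.congr_of_eventuallyEq hev
  exact deriv2_nonpos_of_isLocalMax' hgdiff hgmax hdd

open Filter Set in
open scoped RealInnerProductSpace in
private lemma D2_split' {E : Type*} [NormedAddCommGroup E] [InnerProductSpace ℝ E]
    {u : E → ℝ} {s : Set E} (hs : IsOpen s) (hu : ContDiffOn ℝ 2 u s)
    {z : E} (hz : z ∈ s) (c' : ℝ) (xbar : E) (w : E) :
    fderiv ℝ (fun y => fderiv ℝ (fun x => u x - c' * ⟪x - xbar, x - xbar⟫) y w) z w
      = fderiv ℝ (fun y => fderiv ℝ u y w) z w - c' * (2 * ‖w‖ ^ 2) := by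
  have h1 : ContDiffOn ℝ 1 (fun y => fderiv ℝ u y) s :=
    hu.fderiv_of_isOpen hs (by norm_num)
  have hFc : ContDiffOn ℝ 1 (fun y => fderiv ℝ u y w) s := h1.clm_apply contDiffOn_const
  have hFd : DifferentiableAt ℝ (fun y => fderiv ℝ u y w) z :=
    (hFc.differentiableOn one_ne_zero).differentiableAt (hs.mem_nhds hz)
  have hud : ∀ y ∈ s, DifferentiableAt ℝ u y := fun y hy =>
    (hu.differentiableOn (by norm_num)).differentiableAt (hs.mem_nhds hy)
  have hsubd : ∀ y : E, DifferentiableAt ℝ (fun x : E => x - xbar) y := fun y =>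
    differentiableAt_id.sub (differentiableAt_const _)
  have hsubf : ∀ y : E, fderiv ℝ (fun x : E => x - xbar) y = ContinuousLinearMap.id ℝ E := by
    intro y
    rw [fderiv_sub_const]
    exact fderiv_id
  have hqd : ∀ y : E, DifferentiableAt ℝ (fun x => ⟪x - xbar, x - xbar⟫) y := fun y =>
    (hsubd y).inner ℝ (hsubd y)
  have hqf : ∀ y : E, fderiv ℝ (fun x => ⟪x - xbar, x - xbar⟫) y w
      = ⟪y - xbar, w⟫ + ⟪w, y - xbar⟫ := by
    intro y
    rw [fderiv_inner_apply ℝ (hsubd y) (hsubd y) w, hsubf y]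
    rfl
  have hev : (fun y => fderiv ℝ (fun x => u x - c' * ⟪x - xbar, x - xbar⟫) y w)
      =ᶠ[nhds z] (fun y => fderiv ℝ u y w - c' * (⟪y - xbar, w⟫ + ⟪w, y - xbar⟫)) := by
    filter_upwards [hs.mem_nhds hz] with y hy
    rw [fderiv_fun_sub (hud y hy) ((hqd y).const_mul c'), fderiv_const_mul (hqd y) c']
    simp only [ContinuousLinearMap.coe_sub', Pi.sub_apply, ContinuousLinearMap.coe_smul',
      Pi.smul_apply, hqf y, smul_eq_mul]
  rw [hev.fderiv_eq]
  have hAd : DifferentiableAt ℝ (fun y : E => ⟪y - xbar, w⟫) z :=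
    (hsubd z).inner ℝ (differentiableAt_const w)
  have hBd : DifferentiableAt ℝ (fun y : E => ⟪w, y - xbar⟫) z :=
    (differentiableAt_const w).inner ℝ (hsubd z)
  rw [fderiv_fun_sub hFd (((hAd.fun_add hBd)).const_mul c'),
    fderiv_const_mul (hAd.fun_add hBd) c']
  have hA : fderiv ℝ (fun y : E => ⟪y - xbar, w⟫) z w = ⟪w, w⟫ := by
    rw [fderiv_inner_apply ℝ (hsubd z) (differentiableAt_const w) w, hsubf z]
    simp
  have hB : fderiv ℝ (fun y : E => ⟪w, y - xbar⟫) z w = ⟪w, w⟫ := by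
    rw [fderiv_inner_apply ℝ (differentiableAt_const w) (hsubd z) w, hsubf z]
    simp
  have hsum : fderiv ℝ (fun y : E => ⟪y - xbar, w⟫ + ⟪w, y - xbar⟫) z w = 2 * ‖w‖^2 := by
    rw [fderiv_fun_add hAd hBd]
    simp only [ContinuousLinearMap.add_apply, hA, hB, real_inner_self_eq_norm_sq]
    ring
  simp only [ContinuousLinearMap.coe_sub', Pi.sub_apply, ContinuousLinearMap.coe_smul',
    Pi.smul_apply, hsum, smul_eq_mul]
open scoped RealInnerProductSpace in
/-- Quadratic nondegeneracy step of Proposition 9.1: if `ū ≥ 0` satisfies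
`(Δ + ∂²_{bb}) ū ≥ c̄` on `{ū > 0} ∩ B_r(x̄)` and `ū(x̄) > 0`, then
`sup_{∂B_r(x̄)} ū ≥ c r²` with `c = c̄/(2(n + ‖b‖²))`. -/
theorem quadratic_nondegeneracy (n : ℕ)
    (b : EuclideanSpace ℝ (Fin n)) (cbar r : ℝ) (hcbar : 0 < cbar) (hr : 0 < r)
    (xbar : EuclideanSpace ℝ (Fin n))
    (u : EuclideanSpace ℝ (Fin n) → ℝ)
    (hu2 : ContDiffOn ℝ 2 u (ball xbar r))
    (huc : ContinuousOn u (closedBall xbar r))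
    (hnn : ∀ x ∈ closedBall xbar r, 0 ≤ u x)
    (hsub : ∀ x ∈ ball xbar r, 0 < u x →
      cbar ≤ (∑ i : Fin n,
        fderiv ℝ (fun y => fderiv ℝ u y (EuclideanSpace.single i (1 : ℝ))) x
          (EuclideanSpace.single i (1 : ℝ))) +
        fderiv ℝ (fun y => fderiv ℝ u y b) x b)
    (hpos : 0 < u xbar) :
    ∃ z ∈ sphere xbar r, cbar / (2 * ((n : ℝ) + ‖b‖ ^ 2)) * r ^ 2 ≤ u z := by
  rcases Nat.eq_zero_or_pos n with hn0 | hn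
  · exfalso
    subst hn0
    have hb0 : b = 0 := by ext i; exact Fin.elim0 i
    have h := hsub xbar (mem_ball_self hr) hpos
    rw [hb0] at h
    simp only [Finset.univ_eq_empty, Finset.sum_empty, map_zero, zero_add] at h
    linarith
  haveI : Nonempty (Fin n) := ⟨⟨0, hn⟩⟩
  haveI : Nontrivial (EuclideanSpace ℝ (Fin n)) := by
    refine ⟨⟨0, EuclideanSpace.single ⟨0, hn⟩ 1, fun h => ?_⟩⟩
    have := congrArg (fun x : EuclideanSpace ℝ (Fin n) => ‖x‖) h
    simp [EuclideanSpace.norm_single] at this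
  set D : ℝ := 2 * ((n : ℝ) + ‖b‖ ^ 2) with hD
  have hn1 : (1:ℝ) ≤ (n:ℝ) := by exact_mod_cast hn
  have hDpos : 0 < D := by nlinarith [sq_nonneg ‖b‖]
  have key : ∀ c' : ℝ, 0 < c' → c' * D < cbar → ∃ z ∈ sphere xbar r, c' * r ^ 2 ≤ u z := by
    intro c' hc'pos hc'lt
    set v : EuclideanSpace ℝ (Fin n) → ℝ := fun x => u x - c' * ⟪x - xbar, x - xbar⟫ with hv
    have hqcont : Continuous fun x : EuclideanSpace ℝ (Fin n) => ⟪x - xbar, x - xbar⟫ :=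
      (continuous_id.sub continuous_const).inner (continuous_id.sub continuous_const)
    have hvcont : ContinuousOn v (closedBall xbar r) :=
      huc.sub (continuous_const.mul hqcont).continuousOn
    obtain ⟨z, hzc, hzmax⟩ := (isCompact_closedBall xbar r).exists_isMaxOn
      ⟨xbar, mem_closedBall_self hr.le⟩ hvcont
    have hvxbar : v xbar = u xbar := by simp [hv]
    have hvz : 0 < v z := by
      have h : v xbar ≤ v z := hzmax (mem_closedBall_self hr.le)
      rw [hvxbar] at h
      linarith
    have hzs : z ∉ ball xbar r := by
      intro hzb
      have hq0 : (0:ℝ) ≤ ⟪z - xbar, z - xbar⟫ := real_inner_self_nonneg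
      have huz : 0 < u z := by
        simp only [hv] at hvz
        nlinarith
      have hS := hsub z hzb huz
      have hlm : IsLocalMax v z := hzmax.isLocalMax
        (Filter.mem_of_superset (isOpen_ball.mem_nhds hzb) ball_subset_closedBall)
      have hv2 : ContDiffOn ℝ 2 v (ball xbar r) :=
        hu2.sub (contDiff_const.mul
          ((contDiff_id.sub contDiff_const).inner ℝ (contDiff_id.sub contDiff_const))).contDiffOn
      have hbound : ∀ w, fderiv ℝ (fun y => fderiv ℝ u y w) z w ≤ c' * (2 * ‖w‖ ^ 2) := by
        intro w
        have h1 := second_dir_deriv_nonpos' isOpen_ball hv2 hzb hlm w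
        rw [D2_split' isOpen_ball hu2 hzb c' xbar w] at h1
        linarith
      have hsum : (∑ i : Fin n,
          fderiv ℝ (fun y => fderiv ℝ u y (EuclideanSpace.single i (1:ℝ))) z
            (EuclideanSpace.single i (1:ℝ))) ≤ ∑ _i : Fin n, c' * 2 := by
        apply Finset.sum_le_sum
        intro i _
        have h2 := hbound (EuclideanSpace.single i (1:ℝ))
        rw [EuclideanSpace.norm_single] at h2
        simpa using h2
      have hfinal : cbar ≤ c' * D := by
        have hb2 := hbound b
        calc cbar ≤ _ := hS
          _ ≤ (∑ _i : Fin n, c' * 2) + c' * (2 * ‖b‖ ^ 2) := add_le_add hsum hb2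
          _ = c' * D := by
            rw [Finset.sum_const, Finset.card_univ, Fintype.card_fin, hD]
            ring
      linarith
    have hzsph : z ∈ sphere xbar r := by
      have h1 : dist z xbar ≤ r := mem_closedBall.mp hzc
      have h2 : ¬ dist z xbar < r := fun h => hzs (mem_ball.mpr h)
      exact mem_sphere.mpr (le_antisymm h1 (not_lt.mp h2))
    refine ⟨z, hzsph, ?_⟩
    have hqz : ⟪z - xbar, z - xbar⟫ = r ^ 2 := by
      rw [real_inner_self_eq_norm_sq, ← dist_eq_norm, mem_sphere.mp hzsph]
    simp only [hv, hqz] at hvz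
    linarith
  obtain ⟨z0, hz0s, hz0max⟩ := (isCompact_sphere xbar r).exists_isMaxOn
    (NormedSpace.sphere_nonempty.mpr hr.le) (huc.mono sphere_subset_closedBall)
  refine ⟨z0, hz0s, ?_⟩
  by_contra hlt
  push_neg at hlt
  have hz0nn : 0 ≤ u z0 := hnn z0 (sphere_subset_closedBall hz0s)
  have hr2 : (0:ℝ) < r ^ 2 := by positivity
  have hcpos : 0 < cbar / D := div_pos hcbar hDpos
  set c' : ℝ := (u z0 / r ^ 2 + cbar / D) / 2 with hc'
  have h1 : u z0 / r ^ 2 < cbar / D := by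
    rw [div_lt_iff₀ hr2] at *
    exact hlt
  have hc'pos : 0 < c' := by
    have : 0 ≤ u z0 / r ^ 2 := by positivity
    rw [hc']
    linarith
  have hc'lt : c' * D < cbar := by
    have hc'c : c' < cbar / D := by rw [hc']; linarith
    calc c' * D < (cbar / D) * D := by exact mul_lt_mul_of_pos_right hc'c hDpos
      _ = cbar := by field_simp
  obtain ⟨z, hzs, hzineq⟩ := key c' hc'pos hc'lt
  have hle : u z ≤ u z0 := hz0max hzs
  have h2 : u z0 < c' * r ^ 2 := by
    have h3 : u z0 / r ^ 2 < c' := by rw [hc']; linarith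
    calc u z0 = (u z0 / r ^ 2) * r ^ 2 := by field_simp
      _ < c' * r ^ 2 := mul_lt_mul_of_pos_right h3 hr2
  linarith
end
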